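/- Let H = k[X, Y, Z] be the bialgebra with Δ(X) = 1 ⊗ X + X ⊗ 1 + Y ⊗ Z, Δ(Y) = 1 ⊗ Y + Y ⊗ 1, Δ(Z) = 1 ⊗ Z + Z ⊗ 1 (extended multiplicatively). Then the non-cocommutative 5-dimensional rack bialgebra C (with basis 1, x, y, z, t, Δ(x) = 1⊗x + x⊗1 + y⊗z, and rack product x ◁ y = x ◁ z = t, all other products of basis elements of ker ε equal to 0 except c ◁ 1 = c) is a Yetter-Drinfel'd rack over H via the coalgebra morphism q with q(x) = X, q(y) = Y, q(z) = Z, q(t) = 0, and the H-module structure determined by a · q(b) = a ◁ b. -/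

import Mathlib

open TensorProduct

set_option maxHeartbeats 1000000

/-- A rack bialgebra over a field `k`: a counital coaugmented coalgebra
`(C, Δ, ε, 1)` together with a coalgebra morphism `◁ : C ⊗ C → C`
(given here as a bilinear map `lhd`) which is self-distributive and satisfies
`x ◁ 1 = x`, `1 ◁ x = ε(x)·1` and `ε(x ◁ y) = ε(x)ε(y)`. -/
structure RackBialgebra (k C : Type) [Field k] [AddCommGroup C] [Module k C] where
  comul : C →ₗ[k] C ⊗[k] C
  counit : C →ₗ[k] k
  one : C
  lhd : C →ₗ[k] C →ₗ[k] C
  coassoc : (TensorProduct.assoc k C C C).toLinearMap ∘ₗ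
      TensorProduct.map comul LinearMap.id ∘ₗ comul =
    TensorProduct.map LinearMap.id comul ∘ₗ comul
  counit_comul : (TensorProduct.lid k C).toLinearMap ∘ₗ
      TensorProduct.map counit LinearMap.id ∘ₗ comul = LinearMap.id
  comul_counit : (TensorProduct.rid k C).toLinearMap ∘ₗ
      TensorProduct.map LinearMap.id counit ∘ₗ comul = LinearMap.id
  comul_one : comul one = one ⊗ₜ[k] one
  counit_one : counit one = 1
  lhd_one : ∀ a, lhd a one = a
  one_lhd : ∀ a, lhd one a = counit a • one
  counit_lhd : ∀ a b, counit (lhd a b) = counit a * counit b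
  lhd_coalgebra_morphism : comul ∘ₗ TensorProduct.lift lhd =
    TensorProduct.map (TensorProduct.lift lhd) (TensorProduct.lift lhd) ∘ₗ
      (TensorProduct.tensorTensorTensorComm k C C C C).toLinearMap ∘ₗ
      TensorProduct.map comul comul
  self_distrib : TensorProduct.lift lhd ∘ₗ
      TensorProduct.map (TensorProduct.lift lhd) LinearMap.id =
    TensorProduct.lift lhd ∘ₗ
      TensorProduct.map (TensorProduct.lift lhd) (TensorProduct.lift lhd) ∘ₗ
      (TensorProduct.tensorTensorTensorComm k C C C C).toLinearMap ∘ₗ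
      TensorProduct.map LinearMap.id comul

/-- Cocommutativity of the underlying coalgebra of a rack bialgebra. -/
def RackBialgebra.Cocommutative {k C : Type} [Field k] [AddCommGroup C]
    [Module k C] (R : RackBialgebra k C) : Prop :=
  (TensorProduct.comm k C C).toLinearMap ∘ₗ R.comul = R.comul

open TensorProduct

variable (k : Type) [Field k]

/-- The standard basis `1 = e 0, x = e 1, y = e 2, z = e 3, t = e 4` of the
5-dimensional coalgebra `C`. -/
noncomputable def e5 (i : Fin 5) : Fin 5 → k := Pi.basisFun k (Fin 5) i

/-- The coproduct of the 5-dimensional coalgebra: `1` is group-like,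
`y, z, t` are primitive, and `Δ(x) = 1 ⊗ x + x ⊗ 1 + y ⊗ z`. -/
noncomputable def comul5 : (Fin 5 → k) →ₗ[k] (Fin 5 → k) ⊗[k] (Fin 5 → k) :=
  (Pi.basisFun k (Fin 5)).constr k (fun i =>
    match i with
    | 0 => e5 k 0 ⊗ₜ[k] e5 k 0
    | 1 => e5 k 0 ⊗ₜ[k] e5 k 1 + e5 k 1 ⊗ₜ[k] e5 k 0 + e5 k 2 ⊗ₜ[k] e5 k 3
    | 2 => e5 k 0 ⊗ₜ[k] e5 k 2 + e5 k 2 ⊗ₜ[k] e5 k 0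
    | 3 => e5 k 0 ⊗ₜ[k] e5 k 3 + e5 k 3 ⊗ₜ[k] e5 k 0
    | 4 => e5 k 0 ⊗ₜ[k] e5 k 4 + e5 k 4 ⊗ₜ[k] e5 k 0)

/-- The counit of the 5-dimensional coalgebra: the coefficient of `1`. -/
def counit5 : (Fin 5 → k) →ₗ[k] k := LinearMap.proj 0


/-- The rack product of the non-cocommutative 5-dimensional rack bialgebra:
`x ◁ y = x ◁ z = t`, all other products of basis elements of `ker ε` vanish,
`c ◁ 1 = c` and `1 ◁ c = ε(c)·1`. -/
noncomputable def lhd5 : (Fin 5 → k) →ₗ[k] (Fin 5 → k) →ₗ[k] (Fin 5 → k) :=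
  (Pi.basisFun k (Fin 5)).constr k (fun i =>
    match i with
    | 0 => LinearMap.toSpanSingleton k (Fin 5 → k) (e5 k 0) ∘ₗ counit5 k
    | 1 => (Pi.basisFun k (Fin 5)).constr k (fun j =>
        match j with
        | 0 => e5 k 1 | 1 => 0 | 2 => e5 k 4 | 3 => e5 k 4 | 4 => 0)
    | 2 => (Pi.basisFun k (Fin 5)).constr k (fun j =>
        match j with | 0 => e5 k 2 | _ => 0)
    | 3 => (Pi.basisFun k (Fin 5)).constr k (fun j =>
        match j with | 0 => e5 k 3 | _ => 0)
    | 4 => (Pi.basisFun k (Fin 5)).constr k (fun j =>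
        match j with | 0 => e5 k 4 | _ => 0))

/-- The coproduct of the bialgebra `H = k[X, Y, Z]` with
`Δ(X) = 1 ⊗ X + X ⊗ 1 + Y ⊗ Z` and `Y, Z` primitive. -/
noncomputable def comulH : MvPolynomial (Fin 3) k →ₐ[k]
    MvPolynomial (Fin 3) k ⊗[k] MvPolynomial (Fin 3) k :=
  MvPolynomial.aeval (fun i =>
    match i with
    | 0 => (1 : MvPolynomial (Fin 3) k) ⊗ₜ[k] MvPolynomial.X 0 +
        MvPolynomial.X 0 ⊗ₜ[k] (1 : MvPolynomial (Fin 3) k) +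
        MvPolynomial.X 1 ⊗ₜ[k] MvPolynomial.X 2
    | 1 => (1 : MvPolynomial (Fin 3) k) ⊗ₜ[k] MvPolynomial.X 1 +
        MvPolynomial.X 1 ⊗ₜ[k] (1 : MvPolynomial (Fin 3) k)
    | 2 => (1 : MvPolynomial (Fin 3) k) ⊗ₜ[k] MvPolynomial.X 2 +
        MvPolynomial.X 2 ⊗ₜ[k] (1 : MvPolynomial (Fin 3) k))

/-- The counit of the bialgebra `H = k[X, Y, Z]`. -/
noncomputable def counitH : MvPolynomial (Fin 3) k →ₐ[k] k :=
  MvPolynomial.aeval (fun _ => 0)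

/-- The coalgebra morphism `q : C → H`, with `q(1) = 1`, `q(x) = X`,
`q(y) = Y`, `q(z) = Z`, `q(t) = 0`. -/
noncomputable def q17 : (Fin 5 → k) →ₗ[k] MvPolynomial (Fin 3) k :=
  (Pi.basisFun k (Fin 5)).constr k (fun i =>
    match i with
    | 0 => 1
    | 1 => MvPolynomial.X 0
    | 2 => MvPolynomial.X 1
    | 3 => MvPolynomial.X 2
    | 4 => 0)


set_option maxRecDepth 8000
set_option synthInstance.maxHeartbeats 1000000

noncomputable def Emap : (Fin 5 → k) →ₗ[k] (Fin 5 → k) :=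
  LinearMap.toSpanSingleton k (Fin 5 → k) (e5 k 4) ∘ₗ LinearMap.proj 1

lemma Emap_apply (c : Fin 5 → k) : Emap k c = c 1 • e5 k 4 := rfl

lemma e5_apply (i j : Fin 5) : e5 k i j = if j = i then 1 else 0 := by
  simp [e5, Pi.basisFun_apply, Pi.single_apply]

lemma Emap_e5 : ∀ i, Emap k (e5 k i) = if i = 1 then e5 k 4 else 0 := by
  intro i; fin_cases i <;> simp [Emap_apply, e5, Pi.basisFun_apply, Pi.single_apply]

lemma Emap_Emap (c : Fin 5 → k) : Emap k (Emap k c) = 0 := by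
  simp [Emap_apply, e5, Pi.basisFun_apply]

noncomputable def rho : MvPolynomial (Fin 3) k →ₐ[k] DualNumber k :=
  MvPolynomial.aeval (fun i => match i with
    | 0 => 0 | 1 => DualNumber.eps | 2 => DualNumber.eps)

lemma rho_X0 : rho k (MvPolynomial.X 0) = 0 := by simp [rho]
lemma rho_X1 : rho k (MvPolynomial.X 1) = DualNumber.eps := by simp [rho]
lemma rho_X2 : rho k (MvPolynomial.X 2) = DualNumber.eps := by simp [rho]

noncomputable def Phi : MvPolynomial (Fin 3) k →ₗ[k] Module.End k (Fin 5 → k) :=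
  LinearMap.smulRight ((TrivSqZeroExt.fstHom k k k).toLinearMap ∘ₗ (rho k).toLinearMap)
    LinearMap.id
  + LinearMap.smulRight (TrivSqZeroExt.sndHom k k ∘ₗ (rho k).toLinearMap) (Emap k)

lemma Phi_apply (h : MvPolynomial (Fin 3) k) (c : Fin 5 → k) :
    Phi k h c = (rho k h).fst • c + (rho k h).snd • Emap k c := by
  simp [Phi, TrivSqZeroExt.fstHom]
  rfl

lemma fst_rho : (TrivSqZeroExt.fstHom k k k).comp (rho k) = counitH k := by
  apply MvPolynomial.algHom_ext
  intro i
  fin_cases i <;> simp [rho, counitH]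

lemma fst_rho_eq (h : MvPolynomial (Fin 3) k) : (rho k h).fst = counitH k h :=
  DFunLike.congr_fun (fst_rho k) h

lemma act_one : ∀ c : Fin 5 → k, (Phi k).flip c (1 : MvPolynomial (Fin 3) k) = c := by
  intro c
  simp [Phi_apply]

lemma act_mul : ∀ (c : Fin 5 → k) (g h : MvPolynomial (Fin 3) k),
    (Phi k).flip ((Phi k).flip c g) h = (Phi k).flip c (g * h) := by
  intro c g h
  show Phi k h (Phi k g c) = Phi k (g * h) c
  simp only [Phi_apply, map_mul, map_add, map_smul, Emap_Emap, smul_zero,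
    TrivSqZeroExt.fst_mul, TrivSqZeroExt.snd_mul, add_zero, smul_add,
    op_smul_eq_smul, smul_eq_mul]
  module

lemma q17_e5 (i : Fin 5) : q17 k (e5 k i) =
    match i with
    | 0 => 1 | 1 => MvPolynomial.X 0 | 2 => MvPolynomial.X 1
    | 3 => MvPolynomial.X 2 | 4 => 0 := by
  simp only [q17, e5, Module.Basis.constr_basis]

lemma q17_e5_zero : q17 k (e5 k 0) = 1 := q17_e5 k 0

lemma lhd5_e5 (i : Fin 5) : lhd5 k (e5 k i) =
    match i with
    | 0 => LinearMap.toSpanSingleton k (Fin 5 → k) (e5 k 0) ∘ₗ counit5 k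
    | 1 => (Pi.basisFun k (Fin 5)).constr k (fun j =>
        match j with
        | 0 => e5 k 1 | 1 => 0 | 2 => e5 k 4 | 3 => e5 k 4 | 4 => 0)
    | 2 => (Pi.basisFun k (Fin 5)).constr k (fun j =>
        match j with | 0 => e5 k 2 | _ => 0)
    | 3 => (Pi.basisFun k (Fin 5)).constr k (fun j =>
        match j with | 0 => e5 k 3 | _ => 0)
    | 4 => (Pi.basisFun k (Fin 5)).constr k (fun j =>
        match j with | 0 => e5 k 4 | _ => 0) := by
  simp only [lhd5, e5, Module.Basis.constr_basis]

lemma comul5_e5 (i : Fin 5) : comul5 k (e5 k i) =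
    match i with
    | 0 => e5 k 0 ⊗ₜ[k] e5 k 0
    | 1 => e5 k 0 ⊗ₜ[k] e5 k 1 + e5 k 1 ⊗ₜ[k] e5 k 0 + e5 k 2 ⊗ₜ[k] e5 k 3
    | 2 => e5 k 0 ⊗ₜ[k] e5 k 2 + e5 k 2 ⊗ₜ[k] e5 k 0
    | 3 => e5 k 0 ⊗ₜ[k] e5 k 3 + e5 k 3 ⊗ₜ[k] e5 k 0
    | 4 => e5 k 0 ⊗ₜ[k] e5 k 4 + e5 k 4 ⊗ₜ[k] e5 k 0 := by
  simp only [comul5, e5, Module.Basis.constr_basis]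

lemma counit5_e5 : ∀ i, counit5 k (e5 k i) = if i = 0 then 1 else 0 := by
  intro i; fin_cases i <;> simp [counit5, e5, Pi.basisFun_apply, Pi.single_apply]

lemma counit5_Emap (c : Fin 5 → k) : counit5 k (Emap k c) = 0 := by
  simp [Emap_apply, counit5_e5]

lemma constr_e5 {N : Type} [AddCommGroup N] [Module k N] (f : Fin 5 → N) (i : Fin 5) :
    ((Pi.basisFun k (Fin 5)).constr (M' := N) k f) (e5 k i) = f i :=
  (Pi.basisFun k (Fin 5)).constr_basis k f i

lemma q17_Emap : q17 k ∘ₗ Emap k = 0 := by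
  apply (Pi.basisFun k (Fin 5)).ext; intro i
  have h0 : ∀ j, Pi.basisFun k (Fin 5) j = e5 k j := fun _ => rfl
  fin_cases i <;> simp [h0, Emap_e5, q17_e5]

lemma Phi_q17 : (Phi k) ∘ₗ q17 k = (lhd5 k).flip := by
  apply (Pi.basisFun k (Fin 5)).ext; intro j
  apply (Pi.basisFun k (Fin 5)).ext; intro i
  have h0 : ∀ j, Pi.basisFun k (Fin 5) j = e5 k j := fun _ => rfl
  fin_cases j <;> fin_cases i <;>
    simp [h0, q17_e5, Phi_apply, rho_X0, rho_X1, rho_X2, Emap_e5, lhd5_e5,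
      counit5_e5, constr_e5, DualNumber.fst_eps, DualNumber.snd_eps,
      LinearMap.flip_apply, Fin.sum_univ_five, e5_apply]

lemma act_q17 : ∀ a b : Fin 5 → k, (Phi k).flip a (q17 k b) = lhd5 k a b := by
  intro a b
  have h := DFunLike.congr_fun (DFunLike.congr_fun (Phi_q17 k) b) a
  simpa using h

lemma hE1 : comul5 k ∘ₗ Emap k =
    TensorProduct.map LinearMap.id (Emap k) ∘ₗ comul5 k +
    TensorProduct.map (Emap k) LinearMap.id ∘ₗ comul5 k := by
  apply (Pi.basisFun k (Fin 5)).ext; intro i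
  have h0 : ∀ j, Pi.basisFun k (Fin 5) j = e5 k j := fun _ => rfl
  fin_cases i <;>
    simp [h0, comul5_e5, Emap_e5, tmul_add, add_tmul, map_tmul]

lemma hE2 : TensorProduct.map (Emap k) (Emap k) ∘ₗ comul5 k = 0 := by
  apply (Pi.basisFun k (Fin 5)).ext; intro i
  have h0 : ∀ j, Pi.basisFun k (Fin 5) j = e5 k j := fun _ => rfl
  fin_cases i <;> simp [h0, comul5_e5, Emap_e5]

lemma coassocH :
    (TensorProduct.assoc k (MvPolynomial (Fin 3) k) (MvPolynomial (Fin 3) k)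
        (MvPolynomial (Fin 3) k)).toLinearMap ∘ₗ
        TensorProduct.map (comulH k).toLinearMap LinearMap.id ∘ₗ
        (comulH k).toLinearMap =
      TensorProduct.map LinearMap.id (comulH k).toLinearMap ∘ₗ
        (comulH k).toLinearMap := by
  have e1 : TensorProduct.map (LinearMap.id : MvPolynomial (Fin 3) k →ₗ[k] _)
        (comulH k).toLinearMap
      = (Algebra.TensorProduct.map (AlgHom.id k (MvPolynomial (Fin 3) k))
          (comulH k)).toLinearMap :=
    TensorProduct.ext' (fun a b => rfl)
  have e2 : (TensorProduct.assoc k (MvPolynomial (Fin 3) k) (MvPolynomial (Fin 3) k)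
        (MvPolynomial (Fin 3) k)).toLinearMap ∘ₗ
        TensorProduct.map (comulH k).toLinearMap LinearMap.id
      = ((Algebra.TensorProduct.assoc k k k (MvPolynomial (Fin 3) k) (MvPolynomial (Fin 3) k)
        (MvPolynomial (Fin 3) k)).toAlgHom.comp
          (Algebra.TensorProduct.map (comulH k) (AlgHom.id k _))).toLinearMap :=
    TensorProduct.ext' (fun a b => rfl)
  rw [e1, ← AlgHom.comp_toLinearMap, ← LinearMap.comp_assoc, e2, ← AlgHom.comp_toLinearMap]
  congr 1
  apply MvPolynomial.algHom_ext
  intro i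
  fin_cases i <;>
    simp [comulH, tmul_add, add_tmul, Algebra.TensorProduct.one_def,
      Algebra.TensorProduct.assoc_tmul, Algebra.TensorProduct.map_tmul] <;> abel

lemma counitlH :
    (TensorProduct.lid k (MvPolynomial (Fin 3) k)).toLinearMap ∘ₗ
        TensorProduct.map (counitH k).toLinearMap LinearMap.id ∘ₗ
        (comulH k).toLinearMap = LinearMap.id := by
  have e1 : (TensorProduct.lid k (MvPolynomial (Fin 3) k)).toLinearMap ∘ₗ
      TensorProduct.map (counitH k).toLinearMap LinearMap.id
      = ((Algebra.TensorProduct.lid k (MvPolynomial (Fin 3) k)).toAlgHom.comp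
          (Algebra.TensorProduct.map (counitH k) (AlgHom.id k _))).toLinearMap :=
    TensorProduct.ext' (fun a b => rfl)
  rw [← LinearMap.comp_assoc, e1, ← AlgHom.comp_toLinearMap]
  have h2 : ((Algebra.TensorProduct.lid k (MvPolynomial (Fin 3) k)).toAlgHom.comp
          (Algebra.TensorProduct.map (counitH k) (AlgHom.id k _))).comp (comulH k)
      = AlgHom.id k _ := by
    apply MvPolynomial.algHom_ext
    intro i
    fin_cases i <;> simp [comulH, counitH]
  rw [h2]
  rfl

lemma counitrH :
    (TensorProduct.rid k (MvPolynomial (Fin 3) k)).toLinearMap ∘ₗ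
        TensorProduct.map LinearMap.id (counitH k).toLinearMap ∘ₗ
        (comulH k).toLinearMap = LinearMap.id := by
  have e1 : (TensorProduct.rid k (MvPolynomial (Fin 3) k)).toLinearMap ∘ₗ
      TensorProduct.map LinearMap.id (counitH k).toLinearMap
      = ((Algebra.TensorProduct.rid k k (MvPolynomial (Fin 3) k)).toAlgHom.comp
          (Algebra.TensorProduct.map (AlgHom.id k _) (counitH k))).toLinearMap :=
    TensorProduct.ext' (fun a b => rfl)
  rw [← LinearMap.comp_assoc, e1, ← AlgHom.comp_toLinearMap]
  have h2 : ((Algebra.TensorProduct.rid k k (MvPolynomial (Fin 3) k)).toAlgHom.comp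
          (Algebra.TensorProduct.map (AlgHom.id k _) (counitH k))).comp (comulH k)
      = AlgHom.id k _ := by
    apply MvPolynomial.algHom_ext
    intro i
    fin_cases i <;> simp [comulH, counitH]
  rw [h2]
  rfl

lemma q_coalg17 : (comulH k).toLinearMap ∘ₗ q17 k =
    TensorProduct.map (q17 k) (q17 k) ∘ₗ comul5 k := by
  apply (Pi.basisFun k (Fin 5)).ext; intro i
  have h0 : ∀ j, Pi.basisFun k (Fin 5) j = e5 k j := fun _ => rfl
  fin_cases i <;>
    simp [h0, q17_e5, comul5_e5, comulH, tmul_add, add_tmul,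
      Algebra.TensorProduct.one_def]

lemma counitH_q17 : (counitH k).toLinearMap ∘ₗ q17 k = counit5 k := by
  apply (Pi.basisFun k (Fin 5)).ext; intro i
  have h0 : ∀ j, Pi.basisFun k (Fin 5) j = e5 k j := fun _ => rfl
  fin_cases i <;> simp [h0, q17_e5, counitH, counit5_e5]

lemma act_counit : ∀ (c : Fin 5 → k) (h : MvPolynomial (Fin 3) k),
    counit5 k ((Phi k).flip c h) = counit5 k c * counitH k h := by
  intro c h
  show counit5 k (Phi k h c) = _
  rw [Phi_apply]
  simp [counit5_Emap, fst_rho_eq, mul_comm]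

noncomputable def betaL : MvPolynomial (Fin 3) k →ₗ[k] k :=
  TrivSqZeroExt.sndHom k k ∘ₗ (rho k).toLinearMap

lemma snd_rho_eq (h : MvPolynomial (Fin 3) k) : (rho k h).snd = betaL k h := rfl

lemma scalar1 : ∀ h : MvPolynomial (Fin 3) k,
    LinearMap.mul' k k (TensorProduct.map (counitH k).toLinearMap (counitH k).toLinearMap
      ((comulH k).toLinearMap h)) = counitH k h := by
  intro h
  have A : (LinearMap.mul' k k) ∘ₗ
      TensorProduct.map (counitH k).toLinearMap (counitH k).toLinearMap
      = (counitH k).toLinearMap ∘ₗ (TensorProduct.lid k (MvPolynomial (Fin 3) k)).toLinearMap ∘ₗ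
        TensorProduct.map (counitH k).toLinearMap LinearMap.id := by
    apply TensorProduct.ext'
    intro a b
    simp [LinearMap.mul'_apply, smul_eq_mul, mul_comm]
  have B := DFunLike.congr_fun A ((comulH k).toLinearMap h)
  have C := DFunLike.congr_fun (counitlH k) h
  simp only [LinearMap.comp_apply, LinearMap.id_coe, id_eq, AlgHom.toLinearMap_apply] at B C ⊢
  rw [B, C]

lemma scalar2 : ∀ h : MvPolynomial (Fin 3) k,
    LinearMap.mul' k k (TensorProduct.map (counitH k).toLinearMap (betaL k)
      ((comulH k).toLinearMap h)) = betaL k h := by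
  intro h
  have A : (LinearMap.mul' k k) ∘ₗ
      TensorProduct.map (counitH k).toLinearMap (betaL k)
      = (betaL k) ∘ₗ (TensorProduct.lid k (MvPolynomial (Fin 3) k)).toLinearMap ∘ₗ
        TensorProduct.map (counitH k).toLinearMap LinearMap.id := by
    apply TensorProduct.ext'
    intro a b
    simp [LinearMap.mul'_apply, smul_eq_mul, mul_comm]
  have B := DFunLike.congr_fun A ((comulH k).toLinearMap h)
  have C := DFunLike.congr_fun (counitlH k) h
  simp only [LinearMap.comp_apply, LinearMap.id_coe, id_eq, AlgHom.toLinearMap_apply] at B C ⊢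
  rw [B, C]

lemma scalar3 : ∀ h : MvPolynomial (Fin 3) k,
    LinearMap.mul' k k (TensorProduct.map (betaL k) (counitH k).toLinearMap
      ((comulH k).toLinearMap h)) = betaL k h := by
  intro h
  have A : (LinearMap.mul' k k) ∘ₗ
      TensorProduct.map (betaL k) (counitH k).toLinearMap
      = (betaL k) ∘ₗ (TensorProduct.rid k (MvPolynomial (Fin 3) k)).toLinearMap ∘ₗ
        TensorProduct.map LinearMap.id (counitH k).toLinearMap := by
    apply TensorProduct.ext'
    intro a b
    simp [LinearMap.mul'_apply, smul_eq_mul, mul_comm]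
  have B := DFunLike.congr_fun A ((comulH k).toLinearMap h)
  have C := DFunLike.congr_fun (counitrH k) h
  simp only [LinearMap.comp_apply, LinearMap.id_coe, id_eq, AlgHom.toLinearMap_apply] at B C ⊢
  rw [B, C]

lemma liftact_tmul (c : Fin 5 → k) (h : MvPolynomial (Fin 3) k) :
    TensorProduct.lift ((Phi k).flip) (c ⊗ₜ[k] h) = Phi k h c := rfl

lemma modcoalg_key : ∀ (u : (Fin 5 → k) ⊗[k] (Fin 5 → k))
    (v : MvPolynomial (Fin 3) k ⊗[k] MvPolynomial (Fin 3) k),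
    TensorProduct.map (TensorProduct.lift ((Phi k).flip)) (TensorProduct.lift ((Phi k).flip))
      ((TensorProduct.tensorTensorTensorComm k (Fin 5 → k) (Fin 5 → k)
        (MvPolynomial (Fin 3) k) (MvPolynomial (Fin 3) k)) (u ⊗ₜ[k] v))
    = LinearMap.mul' k k (TensorProduct.map (counitH k).toLinearMap (counitH k).toLinearMap v) • u
      + LinearMap.mul' k k (TensorProduct.map (counitH k).toLinearMap (betaL k) v) •
          TensorProduct.map LinearMap.id (Emap k) u
      + LinearMap.mul' k k (TensorProduct.map (betaL k) (counitH k).toLinearMap v) •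
          TensorProduct.map (Emap k) LinearMap.id u
      + LinearMap.mul' k k (TensorProduct.map (betaL k) (betaL k) v) •
          TensorProduct.map (Emap k) (Emap k) u := by
  intro u v
  induction u with
  | zero => simp
  | add x y hx hy =>
    simp only [add_tmul, map_add, hx, hy, smul_add]
    abel
  | tmul c1 c2 =>
    induction v with
    | zero => simp
    | add x y hx hy =>
      simp only [tmul_add, map_add, hx, hy, add_smul]
      abel
    | tmul h1 h2 =>
      rw [TensorProduct.tensorTensorTensorComm_tmul]
      simp only [TensorProduct.map_tmul, liftact_tmul, Phi_apply, fst_rho_eq, snd_rho_eq,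
        LinearMap.mul'_apply, LinearMap.id_coe, id_eq, AlgHom.toLinearMap_apply,
        tmul_add, add_tmul, TensorProduct.tmul_smul, ← TensorProduct.smul_tmul', smul_smul]
      module

lemma modcoalg : comul5 k ∘ₗ TensorProduct.lift ((Phi k).flip) =
    TensorProduct.map (TensorProduct.lift ((Phi k).flip)) (TensorProduct.lift ((Phi k).flip)) ∘ₗ
      (TensorProduct.tensorTensorTensorComm k (Fin 5 → k) (Fin 5 → k)
        (MvPolynomial (Fin 3) k) (MvPolynomial (Fin 3) k)).toLinearMap ∘ₗ
      TensorProduct.map (comul5 k) (comulH k).toLinearMap := by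
  apply TensorProduct.ext'
  intro c h
  simp only [LinearMap.comp_apply, LinearEquiv.coe_coe, TensorProduct.map_tmul, liftact_tmul]
  rw [modcoalg_key k (comul5 k c) ((comulH k).toLinearMap h)]
  rw [scalar1 k h, scalar2 k h, scalar3 k h]
  have h2 := DFunLike.congr_fun (hE2 k) c
  simp only [LinearMap.comp_apply, LinearMap.zero_apply] at h2
  rw [h2, smul_zero, add_zero]
  rw [Phi_apply]
  rw [map_add, map_smul, map_smul]
  have h1 := DFunLike.congr_fun (hE1 k) c
  simp only [LinearMap.comp_apply, LinearMap.add_apply] at h1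
  rw [h1, fst_rho_eq, snd_rho_eq]
  rw [smul_add]
  abel

lemma condD :
    LinearMap.mul' k (MvPolynomial (Fin 3) k) ∘ₗ
        TensorProduct.map LinearMap.id (q17 k ∘ₗ TensorProduct.lift ((Phi k).flip)) ∘ₗ
        (TensorProduct.leftComm k (Fin 5 → k) (MvPolynomial (Fin 3) k)
          (MvPolynomial (Fin 3) k)).toLinearMap ∘ₗ
        TensorProduct.map LinearMap.id (comulH k).toLinearMap =
      LinearMap.mul' k (MvPolynomial (Fin 3) k) ∘ₗ
        TensorProduct.map (q17 k) LinearMap.id := by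
  apply TensorProduct.ext'
  intro c h
  have hq : ∀ (g : MvPolynomial (Fin 3) k) (c : Fin 5 → k),
      q17 k (Phi k g c) = counitH k g • q17 k c := by
    intro g c
    rw [Phi_apply, map_add, map_smul, map_smul]
    have : q17 k (Emap k c) = 0 := DFunLike.congr_fun (q17_Emap k) c
    rw [this, smul_zero, add_zero, fst_rho_eq]
  have key : ∀ v : MvPolynomial (Fin 3) k ⊗[k] MvPolynomial (Fin 3) k,
      LinearMap.mul' k (MvPolynomial (Fin 3) k)
        (TensorProduct.map LinearMap.id (q17 k ∘ₗ TensorProduct.lift ((Phi k).flip))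
          ((TensorProduct.leftComm k (Fin 5 → k) (MvPolynomial (Fin 3) k)
            (MvPolynomial (Fin 3) k)) (c ⊗ₜ[k] v)))
      = ((TensorProduct.rid k (MvPolynomial (Fin 3) k)).toLinearMap
          (TensorProduct.map LinearMap.id (counitH k).toLinearMap v)) * q17 k c := by
    intro v
    induction v with
    | zero => simp
    | add x y hx hy =>
      simp only [tmul_add, map_add, hx, hy, add_mul]
    | tmul h1 h2 =>
      rw [TensorProduct.leftComm_tmul]
      simp only [TensorProduct.map_tmul, LinearMap.comp_apply, liftact_tmul,
        LinearMap.id_coe, id_eq, LinearMap.mul'_apply, hq, LinearEquiv.coe_coe,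
        TensorProduct.rid_tmul, AlgHom.toLinearMap_apply]
      rw [mul_smul_comm, smul_mul_assoc]
  simp only [LinearMap.comp_apply, LinearEquiv.coe_coe, TensorProduct.map_tmul,
    LinearMap.id_coe, id_eq]
  rw [key ((comulH k).toLinearMap h)]
  have h1 := DFunLike.congr_fun (counitrH k) h
  simp only [LinearMap.comp_apply, LinearMap.id_coe, id_eq] at h1
  rw [h1, LinearMap.mul'_apply, mul_comm]

/-- the 5-dimensional non-cocommutative rack bialgebra `C` is a
Yetter-Drinfel'd rack over the bialgebra `H = k[X, Y, Z]` with
`Δ(X) = 1 ⊗ X + X ⊗ 1 + Y ⊗ Z`, via the coalgebra morphism `q` with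
`q(x) = X`, `q(y) = Y`, `q(z) = Z`, `q(t) = 0`, and the `H`-module structure
determined by `a · q(b) = a ◁ b`. -/
theorem five_dimensional_yd_rack :
    -- `Δ_H` is coassociative with counit `ε_H`, so `H` is a bialgebra
    ((TensorProduct.assoc k (MvPolynomial (Fin 3) k) (MvPolynomial (Fin 3) k)
        (MvPolynomial (Fin 3) k)).toLinearMap ∘ₗ
        TensorProduct.map (comulH k).toLinearMap LinearMap.id ∘ₗ
        (comulH k).toLinearMap =
      TensorProduct.map LinearMap.id (comulH k).toLinearMap ∘ₗ
        (comulH k).toLinearMap) ∧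
    ((TensorProduct.lid k (MvPolynomial (Fin 3) k)).toLinearMap ∘ₗ
        TensorProduct.map (counitH k).toLinearMap LinearMap.id ∘ₗ
        (comulH k).toLinearMap = LinearMap.id) ∧
    ((TensorProduct.rid k (MvPolynomial (Fin 3) k)).toLinearMap ∘ₗ
        TensorProduct.map LinearMap.id (counitH k).toLinearMap ∘ₗ
        (comulH k).toLinearMap = LinearMap.id) ∧
    -- `q` is a morphism of counital coaugmented coalgebras
    ((comulH k).toLinearMap ∘ₗ q17 k =
      TensorProduct.map (q17 k) (q17 k) ∘ₗ comul5 k) ∧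
    ((counitH k).toLinearMap ∘ₗ q17 k = counit5 k) ∧
    (q17 k (e5 k 0) = 1) ∧
    -- the right `H`-module coalgebra structure with `a · q(b) = a ◁ b`
    ∃ act : (Fin 5 → k) →ₗ[k] MvPolynomial (Fin 3) k →ₗ[k] (Fin 5 → k),
      (∀ c, act c (1 : MvPolynomial (Fin 3) k) = c) ∧
      (∀ c (g h : MvPolynomial (Fin 3) k), act (act c g) h = act c (g * h)) ∧
      -- condition (c): `a · q(b) = a ◁ b`
      (∀ a b : Fin 5 → k, act a (q17 k b) = lhd5 k a b) ∧
      -- `C` is an `H`-module coalgebra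
      (comul5 k ∘ₗ TensorProduct.lift act =
        TensorProduct.map (TensorProduct.lift act) (TensorProduct.lift act) ∘ₗ
          (TensorProduct.tensorTensorTensorComm k (Fin 5 → k) (Fin 5 → k)
            (MvPolynomial (Fin 3) k) (MvPolynomial (Fin 3) k)).toLinearMap ∘ₗ
          TensorProduct.map (comul5 k) (comulH k).toLinearMap) ∧
      (∀ (c : Fin 5 → k) (h : MvPolynomial (Fin 3) k),
        counit5 k (act c h) = counit5 k c * counitH k h) ∧
      -- condition (d): `h₁ q(a · h₂) = q(a) h`
      (LinearMap.mul' k (MvPolynomial (Fin 3) k) ∘ₗ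
          TensorProduct.map LinearMap.id (q17 k ∘ₗ TensorProduct.lift act) ∘ₗ
          (TensorProduct.leftComm k (Fin 5 → k) (MvPolynomial (Fin 3) k)
            (MvPolynomial (Fin 3) k)).toLinearMap ∘ₗ
          TensorProduct.map LinearMap.id (comulH k).toLinearMap =
        LinearMap.mul' k (MvPolynomial (Fin 3) k) ∘ₗ
          TensorProduct.map (q17 k) LinearMap.id) := by
  classical
  refine ⟨coassocH k, counitlH k, counitrH k, q_coalg17 k, counitH_q17 k, q17_e5_zero k,
    (Phi k).flip, act_one k, act_mul k, act_q17 k, modcoalg k, act_counit k, condD k⟩
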